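/- arXiv:1301.2401 — 7 statements merged into one kernel-verified Lean document; each statement's English description precedes it below -/
import Mathlib

section
/- Let (P_n) be a MOPS with normalization factors h_n and (P̂_n) its kernel MOPS (for the Christoffel transform at c₀) with normalization factors ĥ_n. Then P_n satisfies the three-term recurrence t·P_n = P_{n+1} + (ĥ_n/h_n + h_n/ĥ_{n-1} + c₀)·P_n + (h_n/h_{n-1})·P_{n-1} for n ≥ 1. -/
open Polynomial

private lemma zero_of_orth (M : Polynomial ℂ →ₗ[ℂ] ℂ)
    (R : ℕ → Polynomial ℂ) (g : ℕ → ℂ)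
    (hmon : ∀ n, (R n).Monic) (hdeg : ∀ n, (R n).natDegree = n)
    (horth : ∀ n k, k ≤ n → M (X ^ k * R n) = if n = k then g n else 0)
    (hg : ∀ n, g n ≠ 0) :
    ∀ (n : ℕ) (Q : Polynomial ℂ), Q.degree ≤ (n : ℕ) →
      (∀ k ≤ n, M (X ^ k * Q) = 0) → Q = 0 := by
  intro n
  induction n with
  | zero =>
    intro Q hdQ hQ
    have hQ0 : Q = C (Q.coeff 0) := Polynomial.eq_C_of_degree_le_zero (by exact_mod_cast hdQ)
    have hR0 : R 0 = 1 := (Polynomial.Monic.natDegree_eq_zero (hmon 0)).mp (hdeg 0)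
    have h1 : M 1 = g 0 := by
      have := horth 0 0 le_rfl
      simpa [hR0] using this
    have h0 := hQ 0 le_rfl
    rw [hQ0] at h0
    have he : M (X ^ 0 * C (Q.coeff 0)) = Q.coeff 0 * g 0 := by
      rw [pow_zero, one_mul, show C (Q.coeff 0) = Q.coeff 0 • (1 : Polynomial ℂ) by
        rw [smul_eq_C_mul, mul_one], map_smul, h1, smul_eq_mul]
    rw [he] at h0
    have hc0 : Q.coeff 0 = 0 := by
      rcases mul_eq_zero.mp h0 with h | h
      · exact h
      · exact absurd h (hg 0)
    rw [hQ0, hc0, map_zero]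
  | succ n ih =>
    intro Q hdQ hQ
    set c := Q.coeff (n + 1) with hc
    set Q' := Q - C c * R (n + 1) with hQ'
    have hcoeffR : (R (n + 1)).coeff (n + 1) = 1 := by
      have := (hmon (n + 1)).coeff_natDegree
      rwa [hdeg (n + 1)] at this
    have hdQ' : Q'.degree ≤ (n : ℕ) := by
      rw [Polynomial.degree_le_iff_coeff_zero]
      intro m hm
      have hm' : n < m := by exact_mod_cast hm
      rcases eq_or_lt_of_le (Nat.succ_le_of_lt hm') with heq | hlt
      · subst heq
        simp [hQ', hcoeffR, hc]
      · have h1 : Q.coeff m = 0 := by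
          apply Polynomial.coeff_eq_zero_of_degree_lt
          exact lt_of_le_of_lt hdQ (by exact_mod_cast hlt)
        have h2 : (R (n + 1)).coeff m = 0 := by
          apply Polynomial.coeff_eq_zero_of_natDegree_lt
          rw [hdeg (n + 1)]; exact hlt
        simp [hQ', h1, h2]
    have hQ'orth : ∀ k ≤ n, M (X ^ k * Q') = 0 := by
      intro k hk
      have e : X ^ k * Q' = X ^ k * Q - c • (X ^ k * R (n + 1)) := by
        rw [hQ', smul_eq_C_mul]; ring
      rw [e, map_sub, map_smul, hQ k (hk.trans (Nat.le_succ n)),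
        horth (n + 1) k (hk.trans (Nat.le_succ n))]
      have hne : n + 1 ≠ k := by omega
      simp [hne]
    have hQeq : Q = C c * R (n + 1) := by
      have := sub_eq_zero.mp (ih Q' hdQ' hQ'orth)
      exact sub_eq_zero.mp (ih Q' hdQ' hQ'orth)
    have htop := hQ (n + 1) le_rfl
    rw [hQeq] at htop
    have he : M (X ^ (n + 1) * (C c * R (n + 1))) = c * g (n + 1) := by
      have e2 : X ^ (n + 1) * (C c * R (n + 1)) = c • (X ^ (n + 1) * R (n + 1)) := by
        rw [smul_eq_C_mul]; ring
      rw [e2, map_smul, horth (n + 1) (n + 1) le_rfl, if_pos rfl, smul_eq_mul]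
    rw [he] at htop
    have hc0 : c = 0 := by
      rcases mul_eq_zero.mp htop with h | h
      · exact h
      · exact absurd h (hg (n + 1))
    rw [hQeq, hc0, map_zero, zero_mul]
private lemma deg_sub_le_of_monic {p q : Polynomial ℂ} {n : ℕ} (hp : p.Monic) (hq : q.Monic)
    (hpd : p.natDegree = n + 1) (hqd : q.natDegree = n + 1) :
    (p - q).degree ≤ (n : ℕ) := by
  by_cases h0 : p - q = 0
  · simp [h0]
  have hd : p.degree = q.degree := by
    rw [Polynomial.degree_eq_natDegree hp.ne_zero, Polynomial.degree_eq_natDegree hq.ne_zero,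
      hpd, hqd]
  have hlt := Polynomial.degree_sub_lt hd hp.ne_zero
    (by rw [hp.leadingCoeff, hq.leadingCoeff])
  rw [Polynomial.degree_eq_natDegree hp.ne_zero, hpd] at hlt
  rw [Polynomial.degree_eq_natDegree h0] at hlt ⊢
  have : (p - q).natDegree < n + 1 := by exact_mod_cast hlt
  exact_mod_cast Nat.lt_succ_iff.mp this

section Main

variable
    (c₀ : ℂ) (L : Polynomial ℂ →ₗ[ℂ] ℂ)
    (P Phat : ℕ → Polynomial ℂ) (h hhat : ℕ → ℂ)
    (hPmonic : ∀ n, (P n).Monic) (hPdeg : ∀ n, (P n).natDegree = n)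
    (hPorth : ∀ n k, k ≤ n → L (X ^ k * P n) = if n = k then h n else 0)
    (hh : ∀ n, h n ≠ 0)
    (hQmonic : ∀ n, (Phat n).Monic) (hQdeg : ∀ n, (Phat n).natDegree = n)
    (hQorth : ∀ n k, k ≤ n →
      L ((X - C c₀) * (X ^ k * Phat n)) = if n = k then hhat n else 0)
    (hhhat : ∀ n, hhat n ≠ 0)

include hPmonic hPdeg hPorth hh hQmonic hQdeg hQorth hhhat in
private lemma rel1 : ∀ n,
    (X - C c₀) * Phat n = P (n + 1) + C (hhat n / h n) * P n := by
  intro n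
  set D := (X - C c₀) * Phat n - P (n + 1) - C (hhat n / h n) * P n with hD
  have hAmon : ((X - C c₀) * Phat n).Monic := (monic_X_sub_C c₀).mul (hQmonic n)
  have hAdeg : ((X - C c₀) * Phat n).natDegree = n + 1 := by
    rw [Polynomial.natDegree_mul (monic_X_sub_C c₀).ne_zero (hQmonic n).ne_zero,
      natDegree_X_sub_C, hQdeg n, add_comm]
  have hd1' := deg_sub_le_of_monic (n := n) hAmon (hPmonic (n + 1)) hAdeg (hPdeg (n + 1))
  have hd2 : (C (hhat n / h n) * P n).degree ≤ (n : ℕ) := by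
    calc (C (hhat n / h n) * P n).degree ≤ (C (hhat n / h n)).degree + (P n).degree :=
          Polynomial.degree_mul_le _ _
      _ ≤ 0 + (n : ℕ) := by
          apply add_le_add (Polynomial.degree_C_le)
          rw [Polynomial.degree_eq_natDegree (hPmonic n).ne_zero, hPdeg]
      _ = (n : ℕ) := by rw [zero_add]
  have hdD : D.degree ≤ (n : ℕ) := le_trans (Polynomial.degree_sub_le _ _) (max_le hd1' hd2)
  have horthD : ∀ k ≤ n, L (X ^ k * D) = 0 := by
    intro k hk
    have e : X ^ k * D = (X - C c₀) * (X ^ k * Phat n) - X ^ k * P (n + 1)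
        - (hhat n / h n) • (X ^ k * P n) := by
      rw [hD, smul_eq_C_mul]; ring
    rw [e, map_sub, map_sub, map_smul, hQorth n k hk,
      hPorth (n + 1) k (hk.trans (Nat.le_succ n)), hPorth n k hk]
    have hne : n + 1 ≠ k := by omega
    by_cases hek : n = k
    · simp only [if_pos hek, if_neg hne, smul_eq_mul]
      field_simp [hh n]
      ring
    · simp [hek, hne]
  have hz := zero_of_orth L P h hPmonic hPdeg hPorth hh n D hdD horthD
  rw [hD] at hz
  linear_combination hz

include hPmonic hPdeg hPorth hh hQmonic hQdeg hQorth hhhat in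
private lemma rel2 : ∀ n,
    P (n + 1) = Phat (n + 1) + C (h (n + 1) / hhat n) * Phat n := by
  intro n
  set M : Polynomial ℂ →ₗ[ℂ] ℂ := L.comp (LinearMap.mulLeft ℂ (X - C c₀)) with hM
  have hMapp : ∀ p, M p = L ((X - C c₀) * p) := fun p => rfl
  set E := P (n + 1) - Phat (n + 1) - C (h (n + 1) / hhat n) * Phat n with hE
  have hd1' := deg_sub_le_of_monic (n := n) (hPmonic (n + 1)) (hQmonic (n + 1)) (hPdeg (n + 1)) (hQdeg (n + 1))
  have hd2 : (C (h (n + 1) / hhat n) * Phat n).degree ≤ (n : ℕ) := by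
    calc (C (h (n + 1) / hhat n) * Phat n).degree
        ≤ (C (h (n + 1) / hhat n)).degree + (Phat n).degree := Polynomial.degree_mul_le _ _
      _ ≤ 0 + (n : ℕ) := by
          apply add_le_add (Polynomial.degree_C_le)
          rw [Polynomial.degree_eq_natDegree (hQmonic n).ne_zero, hQdeg]
      _ = (n : ℕ) := by rw [zero_add]
  have hdE : E.degree ≤ (n : ℕ) := le_trans (Polynomial.degree_sub_le _ _) (max_le hd1' hd2)
  have hMorth : ∀ m k, k ≤ m → M (X ^ k * Phat m) = if m = k then hhat m else 0 := by
    intro m k hk; rw [hMapp]; exact hQorth m k hk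
  have horthE : ∀ k ≤ n, M (X ^ k * E) = 0 := by
    intro k hk
    have e : X ^ k * E = X ^ k * P (n + 1) - X ^ k * Phat (n + 1)
        - (h (n + 1) / hhat n) • (X ^ k * Phat n) := by
      rw [hE, smul_eq_C_mul]; ring
    rw [e, map_sub, map_sub, map_smul]
    have e2 : M (X ^ k * P (n + 1)) = if n = k then h (n + 1) else 0 := by
      rw [hMapp]
      have e3 : (X - C c₀) * (X ^ k * P (n + 1))
          = X ^ (k + 1) * P (n + 1) - c₀ • (X ^ k * P (n + 1)) := by
        rw [smul_eq_C_mul, pow_succ]; ring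
      rw [e3, map_sub, map_smul, hPorth (n + 1) (k + 1) (by omega),
        hPorth (n + 1) k (by omega)]
      have hne : n + 1 ≠ k := by omega
      by_cases hek : n = k
      · simp [hek, hne]
      · have hne' : n + 1 ≠ k + 1 := by omega
        simp [hne', hne, hek]
    rw [e2, hMorth (n + 1) k (by omega), hMorth n k hk]
    have hne : n + 1 ≠ k := by omega
    by_cases hek : n = k
    · simp only [if_pos hek, if_neg hne, smul_eq_mul]
      field_simp [hhhat n]
      ring
    · simp [hek, hne]
  have hz := zero_of_orth M Phat hhat hQmonic hQdeg hMorth hhhat n E hdE horthE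
  rw [hE] at hz
  linear_combination hz

end Main
/-- three-term recurrence for `Pₙ` with coefficients expressed through
the normalization factors of the Christoffel pair. -/
theorem three_term_recurrence_P
    (c₀ : ℂ) (L : Polynomial ℂ →ₗ[ℂ] ℂ)
    (P Phat : ℕ → Polynomial ℂ) (h hhat : ℕ → ℂ)
    (hPmonic : ∀ n, (P n).Monic) (hPdeg : ∀ n, (P n).natDegree = n)
    (hPorth : ∀ n k, k ≤ n → L (X ^ k * P n) = if n = k then h n else 0)
    (hh : ∀ n, h n ≠ 0)
    (hQmonic : ∀ n, (Phat n).Monic) (hQdeg : ∀ n, (Phat n).natDegree = n)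
    (hQorth : ∀ n k, k ≤ n →
      L ((X - C c₀) * (X ^ k * Phat n)) = if n = k then hhat n else 0)
    (hhhat : ∀ n, hhat n ≠ 0) :
    ∀ n, 1 ≤ n →
      X * P n =
        P (n + 1) + C (hhat n / h n + h n / hhat (n - 1) + c₀) * P n
          + C (h n / h (n - 1)) * P (n - 1) := by
  intro n hn
  obtain ⟨m, rfl⟩ : ∃ m, n = m + 1 := ⟨n - 1, by omega⟩
  simp only [Nat.add_sub_cancel]
  have e1 := rel1 c₀ L P Phat h hhat hPmonic hPdeg hPorth hh hQmonic hQdeg hQorth hhhat (m + 1)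
  have e3 := rel1 c₀ L P Phat h hhat hPmonic hPdeg hPorth hh hQmonic hQdeg hQorth hhhat m
  have e2 := rel2 c₀ L P Phat h hhat hPmonic hPdeg hPorth hh hQmonic hQdeg hQorth hhhat m
  have key : C (h (m + 1) / hhat m) * C (hhat m / h m) = C (h (m + 1) / h m) := by
    rw [← C_mul]
    congr 1
    field_simp [hhhat m, hh m]
  have Csum : C (hhat (m + 1) / h (m + 1) + h (m + 1) / hhat m + c₀)
      = C (hhat (m + 1) / h (m + 1)) + C (h (m + 1) / hhat m) + C c₀ := by
    simp [C_add]
  rw [Csum]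
  linear_combination (X - C c₀) * e2 + e1 + C (h (m + 1) / hhat m) * e3 + P m * key
end

section
/- Let (P_n) be a MOPS with normalization factors h_n and (P̂_n) its kernel MOPS (for the Christoffel transform at c₀) with normalization factors ĥ_n. Then P̂_n satisfies the three-term recurrence t·P̂_n = P̂_{n+1} + (h_{n+1}/ĥ_n + ĥ_n/h_n + c₀)·P̂_n + (ĥ_n/ĥ_{n-1})·P̂_{n-1} for n ≥ 1. -/
open Polynomial

/-- If `p` and `q` are monic of the same degree `n+1`, the difference has degree `≤ n`. -/
lemma monic_sub_natDegree_le (p q : Polynomial ℂ) (n : ℕ) (hp : p.Monic) (hq : q.Monic)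
    (hdp : p.natDegree = n + 1) (hdq : q.natDegree = n + 1) : (p - q).natDegree ≤ n := by
  by_cases h0 : p - q = 0
  · simp [h0]
  have hd : (p - q).degree < p.degree := by
    refine degree_sub_lt ?_ hp.ne_zero ?_
    · rw [degree_eq_natDegree hp.ne_zero, degree_eq_natDegree hq.ne_zero, hdp, hdq]
    · rw [hp.leadingCoeff, hq.leadingCoeff]
  have := natDegree_lt_natDegree h0 hd
  omega

/-- Zero test: a polynomial of degree ≤ n orthogonal (w.r.t. a linear functional
admitting a MOPS) to all `X^k`, `k ≤ n`, vanishes. -/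
lemma zero_test (Φ : Polynomial ℂ →ₗ[ℂ] ℂ) (Q : ℕ → Polynomial ℂ) (e : ℕ → ℂ)
    (hm : ∀ n, (Q n).Monic) (hd : ∀ n, (Q n).natDegree = n)
    (horth : ∀ n k, k ≤ n → Φ (X ^ k * Q n) = if n = k then e n else 0)
    (he : ∀ n, e n ≠ 0) :
    ∀ n (R : Polynomial ℂ), R.natDegree ≤ n → (∀ k ≤ n, Φ (X ^ k * R) = 0) → R = 0 := by
  intro n
  induction n with
  | zero =>
    intro R hR hk
    have hQ0 : Q 0 = 1 := by
      have h1 : Q 0 = C ((Q 0).coeff 0) := eq_C_of_natDegree_le_zero (hd 0).le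
      have h2 : (Q 0).coeff 0 = 1 := by
        have := hm 0
        rwa [Monic, leadingCoeff, hd] at this
      rw [h2] at h1; simpa using h1
    have hRC : R = C (R.coeff 0) := eq_C_of_natDegree_le_zero hR
    have h1 : Φ (X ^ 0 * R) = 0 := hk 0 le_rfl
    rw [pow_zero, one_mul] at h1
    have h2 : Φ 1 = e 0 := by
      have := horth 0 0 le_rfl
      rw [hQ0, pow_zero, one_mul, if_pos rfl] at this
      exact this
    have h3 : Φ R = R.coeff 0 * e 0 := by
      conv_lhs => rw [hRC]
      have hsm : (C (R.coeff 0) : Polynomial ℂ) = R.coeff 0 • (1 : Polynomial ℂ) := by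
        rw [smul_eq_C_mul, mul_one]
      rw [hsm, map_smul, h2, smul_eq_mul]
    rw [h1] at h3
    have hc0 : R.coeff 0 = 0 := by
      rcases mul_eq_zero.mp h3.symm with h | h
      · exact h
      · exact absurd h (he 0)
    rw [hRC, hc0, map_zero]
  | succ n ih =>
    intro R hR hk
    set c := R.coeff (n + 1) with hc
    have hlc : (Q (n + 1)).coeff (n + 1) = 1 := by
      have := hm (n + 1)
      rwa [Monic, leadingCoeff, hd] at this
    have hR' : (R - C c * Q (n + 1)).natDegree ≤ n := by
      rw [natDegree_le_iff_coeff_eq_zero]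
      intro m hmn
      simp only [coeff_sub, coeff_C_mul]
      rcases eq_or_lt_of_le (Nat.succ_le_of_lt hmn) with hEq | hlt
      · rw [← hEq, hlc, mul_one, ← hc, sub_self]
      · rw [coeff_eq_zero_of_natDegree_lt (lt_of_le_of_lt hR hlt),
          coeff_eq_zero_of_natDegree_lt (by rw [hd]; exact hlt), mul_zero, sub_self]
    have hk' : ∀ k ≤ n, Φ (X ^ k * (R - C c * Q (n + 1))) = 0 := by
      intro k hkn
      have h1 := hk k (le_trans hkn (Nat.le_succ n))
      have h2 := horth (n + 1) k (le_trans hkn (Nat.le_succ n))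
      rw [if_neg (by omega)] at h2
      have e1 : X ^ k * (R - C c * Q (n + 1)) = X ^ k * R - c • (X ^ k * Q (n + 1)) := by
        rw [smul_eq_C_mul]; ring
      rw [e1, map_sub, map_smul, h1, h2, smul_zero, sub_zero]
    have hRz : R - C c * Q (n + 1) = 0 := ih _ hR' hk'
    have hReq : R = C c * Q (n + 1) := sub_eq_zero.mp hRz
    have h3 := hk (n + 1) le_rfl
    rw [hReq] at h3
    have h4 := horth (n + 1) (n + 1) le_rfl
    rw [if_pos rfl] at h4
    have h5 : c * e (n + 1) = 0 := by
      have e2 : X ^ (n + 1) * (C c * Q (n + 1)) = c • (X ^ (n + 1) * Q (n + 1)) := by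
        rw [smul_eq_C_mul]; ring
      rw [e2, map_smul, h4, smul_eq_mul] at h3
      exact h3
    have hc0 : c = 0 := by
      rcases mul_eq_zero.mp h5 with hh' | hh'
      · exact hh'
      · exact absurd hh' (he (n + 1))
    rw [hReq, hc0, map_zero, zero_mul]

/-- three-term recurrence for the kernel polynomials `P̂ₙ`. -/
theorem three_term_recurrence_Phat
    (c₀ : ℂ) (L : Polynomial ℂ →ₗ[ℂ] ℂ)
    (P Phat : ℕ → Polynomial ℂ) (h hhat : ℕ → ℂ)
    (hPmonic : ∀ n, (P n).Monic) (hPdeg : ∀ n, (P n).natDegree = n)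
    (hPorth : ∀ n k, k ≤ n → L (X ^ k * P n) = if n = k then h n else 0)
    (hh : ∀ n, h n ≠ 0)
    (hQmonic : ∀ n, (Phat n).Monic) (hQdeg : ∀ n, (Phat n).natDegree = n)
    (hQorth : ∀ n k, k ≤ n →
      L ((X - C c₀) * (X ^ k * Phat n)) = if n = k then hhat n else 0)
    (hhhat : ∀ n, hhat n ≠ 0) :
    ∀ n, 1 ≤ n →
      X * Phat n =
        Phat (n + 1) + C (h (n + 1) / hhat n + hhat n / h n + c₀) * Phat n
          + C (hhat n / hhat (n - 1)) * Phat (n - 1) := by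
  -- the modified functional  f ↦ L((X - c₀) f)
  set Φ : Polynomial ℂ →ₗ[ℂ] ℂ := L ∘ₗ LinearMap.mulLeft ℂ (X - C c₀) with hΦ
  have hΦapp : ∀ f : Polynomial ℂ, Φ f = L ((X - C c₀) * f) := by
    intro f; simp [hΦ, LinearMap.mulLeft_apply]
  have hQorthΦ : ∀ n k, k ≤ n → Φ (X ^ k * Phat n) = if n = k then hhat n else 0 := by
    intro n k hk; rw [hΦapp]; exact hQorth n k hk
  -- Step 1 (Christoffel): (X - c₀) P̂ⱼ = P_{j+1} + (ĥⱼ/hⱼ) Pⱼ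
  have step1 : ∀ j, (X - C c₀) * Phat j = P (j + 1) + C (hhat j / h j) * P j := by
    intro j
    have hA : ((X - C c₀) * Phat j).Monic := (monic_X_sub_C c₀).mul (hQmonic j)
    have hAd : ((X - C c₀) * Phat j).natDegree = j + 1 := by
      rw [natDegree_mul (X_sub_C_ne_zero c₀) (hQmonic j).ne_zero, natDegree_X_sub_C, hQdeg]
      omega
    set R := (X - C c₀) * Phat j - P (j + 1) - C (hhat j / h j) * P j with hRdef
    have hdeg : R.natDegree ≤ j := by
      have h1 : ((X - C c₀) * Phat j - P (j + 1)).natDegree ≤ j :=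
        monic_sub_natDegree_le _ _ j hA (hPmonic (j + 1)) hAd (hPdeg (j + 1))
      calc R.natDegree ≤ max ((X - C c₀) * Phat j - P (j + 1)).natDegree
            (C (hhat j / h j) * P j).natDegree := natDegree_sub_le _ _
        _ ≤ j := max_le h1 (le_trans (natDegree_C_mul_le _ _) (hPdeg j).le)
    have horthR : ∀ k ≤ j, L (X ^ k * R) = 0 := by
      intro k hk
      have e1 : X ^ k * R =
          (X - C c₀) * (X ^ k * Phat j) - X ^ k * P (j + 1)
            - (hhat j / h j) • (X ^ k * P j) := by
        rw [hRdef, smul_eq_C_mul]; ring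
      rw [e1, map_sub, map_sub, map_smul, hQorth j k hk,
        hPorth (j + 1) k (le_trans hk (Nat.le_succ j)), hPorth j k hk,
        if_neg (show ¬(j + 1 = k) by omega), smul_eq_mul]
      by_cases hkj : j = k
      · rw [if_pos hkj, if_pos hkj, div_mul_cancel₀ _ (hh j)]; ring
      · rw [if_neg hkj, if_neg hkj]; ring
    have hz := zero_test L P h hPmonic hPdeg hPorth hh j R hdeg horthR
    rw [hRdef, sub_sub, sub_eq_zero] at hz
    exact hz
  -- Step 2: P_{m+1} = P̂_{m+1} + (h_{m+1}/ĥₘ) P̂ₘ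
  have step2 : ∀ m, P (m + 1) = Phat (m + 1) + C (h (m + 1) / hhat m) * Phat m := by
    intro m
    set R := P (m + 1) - Phat (m + 1) - C (h (m + 1) / hhat m) * Phat m with hRdef
    have hdeg : R.natDegree ≤ m := by
      have h1 : (P (m + 1) - Phat (m + 1)).natDegree ≤ m :=
        monic_sub_natDegree_le _ _ m (hPmonic (m + 1)) (hQmonic (m + 1))
          (hPdeg (m + 1)) (hQdeg (m + 1))
      calc R.natDegree ≤ max (P (m + 1) - Phat (m + 1)).natDegree
            (C (h (m + 1) / hhat m) * Phat m).natDegree := natDegree_sub_le _ _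
        _ ≤ m := max_le h1 (le_trans (natDegree_C_mul_le _ _) (hQdeg m).le)
    have horthR : ∀ k ≤ m, Φ (X ^ k * R) = 0 := by
      intro k hk
      have hP1 : Φ (X ^ k * P (m + 1)) = if k = m then h (m + 1) else 0 := by
        rw [hΦapp]
        have e2 : (X - C c₀) * (X ^ k * P (m + 1)) =
            X ^ (k + 1) * P (m + 1) - c₀ • (X ^ k * P (m + 1)) := by
          rw [smul_eq_C_mul, pow_succ]; ring
        rw [e2, map_sub, map_smul, hPorth (m + 1) (k + 1) (by omega),
          hPorth (m + 1) k (by omega), if_neg (show ¬(m + 1 = k) by omega),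
          smul_zero, sub_zero]
        by_cases hkm : k = m
        · rw [if_pos (show m + 1 = k + 1 by omega), if_pos hkm]
        · rw [if_neg (show ¬(m + 1 = k + 1) by omega), if_neg hkm]
      have e1 : X ^ k * R = X ^ k * P (m + 1) - X ^ k * Phat (m + 1)
          - (h (m + 1) / hhat m) • (X ^ k * Phat m) := by
        rw [hRdef, smul_eq_C_mul]; ring
      rw [e1, map_sub, map_sub, map_smul, hP1, hQorthΦ (m + 1) k (by omega),
        hQorthΦ m k hk, if_neg (show ¬(m + 1 = k) by omega), smul_eq_mul]
      by_cases hkm : k = m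
      · rw [if_pos hkm, if_pos hkm.symm, div_mul_cancel₀ _ (hhhat m)]; ring
      · rw [if_neg hkm, if_neg (fun hh' => hkm hh'.symm)]; ring
    have hz := zero_test Φ Phat hhat hQmonic hQdeg hQorthΦ hhhat m R hdeg horthR
    rw [hRdef, sub_sub, sub_eq_zero] at hz
    exact hz
  -- Assemble
  intro n hn
  obtain ⟨m, rfl⟩ : ∃ m, n = m + 1 := ⟨n - 1, by omega⟩
  simp only [Nat.add_sub_cancel]
  have e1 := step1 (m + 1)
  have e2 := step2 (m + 1)
  have e3 := step2 m
  have key : X * Phat (m + 1) = (X - C c₀) * Phat (m + 1) + C c₀ * Phat (m + 1) := by ring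
  rw [key, e1, e2, e3]
  have hs : hhat (m + 1) / h (m + 1) * (h (m + 1) / hhat m) = hhat (m + 1) / hhat m := by
    field_simp [hh (m + 1), hhhat m]
  rw [← hs]
  simp only [C_add, C_mul]
  ring
end

section
/- If x_n satisfies the discrete Riccati equation x_n = -c₂²/(n·x_{n-1} + c₂(c₁ + c₀c₂)) with c₂ > 0 and c₁ + c₀c₂ ≠ 0, then X_n := (2(n+1)/(c₂(c₁+c₀c₂)))·x_n + 1 satisfies the discrete Painlevé II equation X_{n+1} + X_{n-1} = ((a n + b)X_n + c)/(1 - X_n²) with a = 8/(c₁+c₀c₂)², b = 12/(c₁+c₀c₂)², c = -4/(c₁+c₀c₂)², for all n ≥ 1 where 1 - X_n² ≠ 0. -/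
lemma riccati_key (u w v c₂ s M : ℂ) (hu : u ≠ 0) (hs : s ≠ 0) (hc2 : c₂ ≠ 0) (hM : M ≠ 0)
    (hD : (M + 1) * u + c₂ * s ≠ 0)
    (h1 : u * (M * v + c₂ * s) = -c₂ ^ 2)
    (h2 : w * ((M + 1) * u + c₂ * s) = -c₂ ^ 2)
    (hX2 : 1 - (2 * (M + 1) / (c₂ * s) * u + 1) ^ 2 ≠ 0) :
    (2 * (M + 2) / (c₂ * s) * w + 1) + (2 * M / (c₂ * s) * v + 1) =
      ((8 / s ^ 2 * M + 12 / s ^ 2) * (2 * (M + 1) / (c₂ * s) * u + 1) + -4 / s ^ 2) /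
        (1 - (2 * (M + 1) / (c₂ * s) * u + 1) ^ 2) := by
  rw [eq_div_iff hX2]
  field_simp
  linear_combination (-8 * (M + 1) * ((M + 1) * u + c₂ * s)) * h1
    + (-8 * u * (M + 1) * (M + 2)) * h2

/-- solutions of the discrete Riccati equation coming from the Hermite
polynomials give solutions of the discrete Painlevé II equation. -/
theorem riccati_to_dPII
    (c₂ : ℝ) (hc₂ : 0 < c₂) (c₀ c₁ : ℂ) (hne : c₁ + c₀ * (c₂ : ℂ) ≠ 0)
    (x : ℕ → ℂ)
    (hx : ∀ n, 1 ≤ n →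
      x n * ((n : ℂ) * x (n - 1) + (c₂ : ℂ) * (c₁ + c₀ * (c₂ : ℂ))) = -(c₂ : ℂ) ^ 2)
    (X : ℕ → ℂ)
    (hX : ∀ n, X n = 2 * ((n : ℂ) + 1) / ((c₂ : ℂ) * (c₁ + c₀ * (c₂ : ℂ))) * x n + 1)
    (a b c : ℂ)
    (ha : a = 8 / (c₁ + c₀ * (c₂ : ℂ)) ^ 2)
    (hb : b = 12 / (c₁ + c₀ * (c₂ : ℂ)) ^ 2)
    (hc : c = -4 / (c₁ + c₀ * (c₂ : ℂ)) ^ 2) :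
    ∀ n, 1 ≤ n → 1 - (X n) ^ 2 ≠ 0 →
      X (n + 1) + X (n - 1) = ((a * (n : ℂ) + b) * X n + c) / (1 - (X n) ^ 2) := by
  intro n hn hX2
  obtain ⟨m, rfl⟩ := Nat.exists_eq_add_of_le hn
  set s : ℂ := c₁ + c₀ * (c₂ : ℂ) with hs
  have hc2' : (c₂ : ℂ) ≠ 0 := by exact_mod_cast hc₂.ne'
  have h1 := hx (1 + m) (by omega)
  have h2 := hx (1 + m + 1) (by omega)
  simp only [Nat.add_sub_cancel, show 1 + m - 1 = m from by omega] at h1 h2 ⊢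
  have hc2sq : -(c₂ : ℂ) ^ 2 ≠ 0 := neg_ne_zero.mpr (pow_ne_zero 2 hc2')
  have hu : x (1 + m) ≠ 0 := by
    intro h; rw [h, zero_mul] at h1; exact hc2sq h1.symm
  have hD : (1 + (m : ℂ) + 1) * x (1 + m) + (c₂ : ℂ) * s ≠ 0 := by
    intro h
    apply hc2sq
    rw [← h2]
    push_cast
    rw [show ((1 : ℂ) + m + 1) * x (1 + m) + (c₂ : ℂ) * s = 0 from h]
    ring
  have hM : (1 : ℂ) + (m : ℂ) ≠ 0 := by
    intro h
    exact Nat.cast_add_one_ne_zero (R := ℂ) m (by linear_combination h)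
  rw [hX (1 + m)] at hX2
  rw [hX (1 + m + 1), hX (1 + m), hX m, ha, hb, hc]
  have key := riccati_key (x (1 + m)) (x (1 + m + 1)) (x m) (c₂ : ℂ) s (1 + (m : ℂ))
    hu hne hc2' hM hD
    (by push_cast at h1 ⊢; linear_combination h1)
    (by push_cast at h2 ⊢; linear_combination h2)
    (by convert hX2 using 3; push_cast; ring)
  convert key using 2 <;> push_cast <;> ring
end

section
/- The discrete Painlevé II equation X_{n+1} + X_{n-1} = ((an+b)X_n + c)/(1 - X_n²) with c = -a/2 admits the specialization to the discrete Riccati equation X_{n+1} = (4X_n - 2an - a - 2b + 4)/(4(X_n + 1)): that is, if X_n satisfies this Riccati equation for all n (with X_n ≠ ±1), then X_n satisfies the discrete Painlevé II equation. -/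
/-- the discrete Painlevé II equation with `c = -a/2` admits the
specialization to the discrete Riccati equation
`X_{n+1} = (4Xₙ - 2an - a - 2b + 4)/(4(Xₙ + 1))`. -/
theorem dPII_riccati_specialization
    (a b c : ℂ) (hc : c = -a / 2) (X : ℕ → ℂ)
    (hX1 : ∀ n, X n ≠ 1) (hX2 : ∀ n, X n ≠ -1)
    (hric : ∀ n, X (n + 1) * (4 * (X n + 1)) = 4 * X n - 2 * a * (n : ℂ) - a - 2 * b + 4) :
    ∀ n, 1 ≤ n →
      X (n + 1) + X (n - 1) = ((a * (n : ℂ) + b) * X n + c) / (1 - (X n) ^ 2) := by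
  rintro n hn
  obtain ⟨m, rfl⟩ := Nat.exists_eq_add_of_le hn
  simp only [Nat.add_sub_cancel_left] at *
  have h1 := hric m
  have h2 := hric (m + 1)
  push_cast at h1 h2 ⊢
  rw [show 1 + m = m + 1 from by ring] at *
  have hp : X (m + 1) + 1 ≠ 0 := fun h => hX2 (m + 1) (by linear_combination h)
  have hm : X (m + 1) - 1 ≠ 0 := fun h => hX1 (m + 1) (by linear_combination h)
  have hd : (1 : ℂ) - X (m + 1) ^ 2 ≠ 0 := by
    intro h
    rcases mul_eq_zero.1 (show (1 - X (m+1)) * (1 + X (m+1)) = 0 by linear_combination h) with h' | h'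
    · exact hm (by linear_combination -h')
    · exact hp (by linear_combination h')
  have e2 : X (m + 1 + 1) = (4 * X (m+1) - 2 * a * ((m:ℂ) + 1) - a - 2 * b + 4) / (4 * (X (m+1) + 1)) := by
    rw [eq_div_iff (by intro h; exact hp (by linear_combination h/4))]
    linear_combination h2
  have e1 : X m = (-(4 * X (m+1)) - 2 * a * (m:ℂ) - a - 2 * b + 4) / (4 * (X (m+1) - 1)) := by
    rw [eq_div_iff (by intro h; exact hm (by linear_combination h/4))]
    linear_combination h1
  rw [e1, e2, hc]
  field_simp
  ring
end

section
/- The contiguity relation I_{l+1,m+1} - I_{l+1,m} - (1-q^{l+1})·q^m·a·I_{l,m} = 0 holds, where I_{l,m} = ∫_{-∞}^{∞} (Π_{k=0}^{l-1}(q^k t - q^m a))/E_{q²}(c₁²t²) d_q t. -/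
/-- The bilateral Jackson integral `∫_{-∞}^{∞} f(t) d_q t`. -/
noncomputable def qIntegral (q : ℂ) (f : ℂ → ℂ) : ℂ :=
  (1 - q) * ∑' n : ℤ, (f (q ^ n) + f (-(q ^ n))) * q ^ n

/-- The infinite q-Pochhammer symbol `(a;q)_∞`. -/
noncomputable def qPochInf (a q : ℂ) : ℂ := ∏' i : ℕ, (1 - a * q ^ i)

/-- The integrand of `I_{l,m}`. -/
noncomputable def Ifun (q a c₁ : ℂ) (l : ℕ) (m : ℤ) (t : ℂ) : ℂ :=
  (∏ k ∈ Finset.range l, (q ^ k * t - q ^ m * a)) / qPochInf (-(c₁ ^ 2 * t ^ 2)) (q ^ 2)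

/-- `I_{l,m} = ∫_{-∞}^{∞} (∏_{k=0}^{l-1}(q^k t - q^m a))/E_{q²}(c₁²t²) d_q t`. -/
noncomputable def Iqm (q a c₁ : ℂ) (l : ℕ) (m : ℤ) : ℂ :=
  qIntegral q (Ifun q a c₁ l m)

lemma num_id (q a t : ℂ) (hq : q ≠ 0) (l : ℕ) (m : ℤ) :
    ∏ k ∈ Finset.range (l + 1), (q ^ k * t - q ^ (m + 1) * a)
      = ∏ k ∈ Finset.range (l + 1), (q ^ k * t - q ^ m * a)
        + (1 - q ^ (l + 1)) * q ^ m * a * ∏ k ∈ Finset.range l, (q ^ k * t - q ^ m * a) := by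
  rw [Finset.prod_range_succ', Finset.prod_range_succ]
  have h1 : ∀ k ∈ Finset.range l,
      q ^ (k + 1) * t - q ^ (m + 1) * a = q * (q ^ k * t - q ^ m * a) := by
    intro k _
    rw [zpow_add_one₀ hq]
    ring
  rw [Finset.prod_congr rfl h1, Finset.prod_mul_distrib, Finset.prod_const, Finset.card_range, zpow_add_one₀ hq]
  ring

lemma Ifun_id (q a c : ℂ) (hq : q ≠ 0) (l : ℕ) (m : ℤ) (t : ℂ) :
    Ifun q a c (l + 1) (m + 1) t
      = Ifun q a c (l + 1) m t + (1 - q ^ (l + 1)) * q ^ m * a * Ifun q a c l m t := by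
  unfold Ifun
  rw [num_id q a t hq l m, add_div, mul_div_assoc]

/-- the contiguity relation
`I_{l+1,m+1} - I_{l+1,m} - (1-q^{l+1}) q^m a I_{l,m} = 0`. -/
theorem contiguity_I_one
    (q : ℂ) (hq0 : 0 < ‖q‖) (hq1 : ‖q‖ < 1)
    (c₁ : ℝ) (hc₁ : 0 < c₁) (a : ℂ) (l : ℕ) (m : ℤ)
    (hsum : ∀ (l' : ℕ) (m' : ℤ), Summable (fun n : ℤ =>
      (Ifun q a (c₁ : ℂ) l' m' (q ^ n) + Ifun q a (c₁ : ℂ) l' m' (-(q ^ n))) * q ^ n)) :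
    Iqm q a (c₁ : ℂ) (l + 1) (m + 1) - Iqm q a (c₁ : ℂ) (l + 1) m
      - (1 - q ^ (l + 1)) * q ^ m * a * Iqm q a (c₁ : ℂ) l m = 0 := by
  have hq : q ≠ 0 := by
    intro h
    simp [h] at hq0
  set C : ℂ := (1 - q ^ (l + 1)) * q ^ m * a with hC
  have hfun : (fun n : ℤ =>
      (Ifun q a (c₁ : ℂ) (l + 1) (m + 1) (q ^ n)
        + Ifun q a (c₁ : ℂ) (l + 1) (m + 1) (-(q ^ n))) * q ^ n)
      = fun n : ℤ =>
        (Ifun q a (c₁ : ℂ) (l + 1) m (q ^ n)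
          + Ifun q a (c₁ : ℂ) (l + 1) m (-(q ^ n))) * q ^ n
        + C * ((Ifun q a (c₁ : ℂ) l m (q ^ n)
          + Ifun q a (c₁ : ℂ) l m (-(q ^ n))) * q ^ n) := by
    funext n
    rw [Ifun_id q a _ hq l m, Ifun_id q a _ hq l m]
    ring
  unfold Iqm qIntegral
  rw [hfun, Summable.tsum_add (hsum (l + 1) m) ((hsum l m).mul_left C), tsum_mul_left]
  ring
end

section
/- Suppose a doubly-indexed sequence ψ_n^{l,m} of nonzero complex numbers satisfies, for all n ≥ 0 and m: (i) ψ_n^{0,m} = ψ_n^{0,0}; (ii) ψ_{n+1}^{1,m+1}ψ_n^{0,0} = a q^{m+n}(1-q^{n+1})ψ_{n+1}^{0,0}ψ_n^{1,m+1} + ψ_{n+1}^{1,m}ψ_n^{0,0}; and (iii) ψ_{n+1}^{1,m}ψ_n^{0,0} = -((1+c₁²a²q^{2m})/(c₁²aq^{m-n}))ψ_{n+1}^{0,0}ψ_n^{1,m+1} + (1/(c₁²aq^{m-n}))ψ_{n+1}^{0,0}ψ_n^{1,m}. Then the linear three-term relation ψ_n^{1,m+2} = ((1+q+c₁²a²q^{2m+n+2})/(1+c₁²a²q^{2m+2}))·ψ_n^{1,m+1}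 - (q/(1+c₁²a²q^{2m+2}))·ψ_n^{1,m} holds. -/
/-- the linear three-term relation in `m` for `ψₙ^{1,m}` follows from
the bilinear relations (i)–(iii). -/
theorem psi_linear_relation
    (q a c₁ : ℂ) (hq : q ≠ 0) (ha : a ≠ 0) (hc₁ : c₁ ≠ 0)
    (ψ : ℕ → ℕ → ℤ → ℂ)
    (hψne : ∀ n l m, ψ n l m ≠ 0)
    (hden : ∀ m : ℤ, 1 + c₁ ^ 2 * a ^ 2 * q ^ (2 * m + 2) ≠ 0)
    (h1 : ∀ (n : ℕ) (m : ℤ), ψ n 0 m = ψ n 0 0)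
    (h2 : ∀ (n : ℕ) (m : ℤ),
      ψ (n + 1) 1 (m + 1) * ψ n 0 0
        = a * q ^ (m + (n : ℤ)) * (1 - q ^ (n + 1)) * ψ (n + 1) 0 0 * ψ n 1 (m + 1)
          + ψ (n + 1) 1 m * ψ n 0 0)
    (h3 : ∀ (n : ℕ) (m : ℤ),
      ψ (n + 1) 1 m * ψ n 0 0
        = -((1 + c₁ ^ 2 * a ^ 2 * q ^ (2 * m)) / (c₁ ^ 2 * a * q ^ (m - (n : ℤ))))
            * ψ (n + 1) 0 0 * ψ n 1 (m + 1)
          + (1 / (c₁ ^ 2 * a * q ^ (m - (n : ℤ)))) * ψ (n + 1) 0 0 * ψ n 1 m) :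
    ∀ (n : ℕ) (m : ℤ),
      ψ n 1 (m + 2)
        = ((1 + q + c₁ ^ 2 * a ^ 2 * q ^ (2 * m + (n : ℤ) + 2))
            / (1 + c₁ ^ 2 * a ^ 2 * q ^ (2 * m + 2))) * ψ n 1 (m + 1)
          - (q / (1 + c₁ ^ 2 * a ^ 2 * q ^ (2 * m + 2))) * ψ n 1 m := by
  intro n m
  have hP : ψ (n + 1) 0 0 ≠ 0 := hψne _ _ _
  have hQ : ψ n 0 0 ≠ 0 := hψne _ _ _
  have hd : (1 + c₁ ^ 2 * a ^ 2 * q ^ (2 * m + 2)) ≠ 0 := hden m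
  have e2 := h2 n m
  have e3a := h3 n (m + 1)
  have e3b := h3 n m
  have hu : (q : ℂ) ^ m ≠ 0 := zpow_ne_zero _ hq
  have hv : (q : ℂ) ^ n ≠ 0 := pow_ne_zero _ hq
  have ra : q ^ (m + 1 - (n:ℤ)) = q ^ m * q / q ^ n := by
    rw [zpow_sub₀ hq, zpow_add₀ hq, zpow_one, zpow_natCast]
  have rb : q ^ (m - (n:ℤ)) = q ^ m / q ^ n := by rw [zpow_sub₀ hq, zpow_natCast]
  have rc : q ^ (m + (n:ℤ)) = q ^ m * q ^ n := by rw [zpow_add₀ hq, zpow_natCast]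
  have rd : q ^ (2 * (m + 1)) = q ^ m * q ^ m * (q * q) := by
    rw [show 2 * (m + 1) = m + m + (1 + 1) by ring, zpow_add₀ hq, zpow_add₀ hq, zpow_add₀ hq, zpow_one]
  have re : q ^ (2 * m) = q ^ m * q ^ m := by
    rw [two_mul, zpow_add₀ hq]
  have rf : q ^ (2 * m + 2) = q ^ m * q ^ m * (q * q) := by
    rw [show 2 * m + 2 = m + m + (1 + 1) by ring, zpow_add₀ hq, zpow_add₀ hq, zpow_add₀ hq, zpow_one]
  have rg : q ^ (2 * m + (n:ℤ) + 2) = q ^ m * q ^ m * q ^ n * (q * q) := by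
    rw [show 2 * m + (n:ℤ) + 2 = m + m + (n:ℤ) + (1 + 1) by ring, zpow_add₀ hq, zpow_add₀ hq,
      zpow_add₀ hq, zpow_add₀ hq, zpow_one, zpow_natCast]
  rw [ra, rd] at e3a
  rw [rb, re] at e3b
  rw [rc, pow_succ] at e2
  rw [rf] at hd
  rw [rf, rg]
  have hca : c₁ ^ 2 * a * (q ^ m * q / q ^ n) ≠ 0 := by
    apply mul_ne_zero (mul_ne_zero (pow_ne_zero _ hc₁) ha)
    exact div_ne_zero (mul_ne_zero hu hq) hv
  have hcb : c₁ ^ 2 * a * (q ^ m / q ^ n) ≠ 0 := by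
    apply mul_ne_zero (mul_ne_zero (pow_ne_zero _ hc₁) ha)
    exact div_ne_zero hu hv
  rw [show m + 1 + 1 = m + 2 from by ring] at e3a
  have E3a : ψ (n + 1) 1 (m + 1) * ψ n 0 0 * (c₁ ^ 2 * a * (q ^ m * q))
      = -((1 + c₁ ^ 2 * a ^ 2 * (q ^ m * q ^ m * (q * q))) * (q ^ n * ψ (n + 1) 0 0 * ψ n 1 (m + 2)))
        + q ^ n * ψ (n + 1) 0 0 * ψ n 1 (m + 1) := by
    rw [e3a]; field_simp [hc₁, ha, hq, hu, hv]
  have E3b : ψ (n + 1) 1 m * ψ n 0 0 * (c₁ ^ 2 * a * q ^ m)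
      = -((1 + c₁ ^ 2 * a ^ 2 * (q ^ m * q ^ m)) * (q ^ n * ψ (n + 1) 0 0 * ψ n 1 (m + 1)))
        + q ^ n * ψ (n + 1) 0 0 * ψ n 1 m := by
    rw [e3b]; field_simp [hc₁, ha, hq, hu, hv]
  rw [div_mul_eq_mul_div, div_mul_eq_mul_div, div_sub_div_same, eq_div_iff hd]
  have hK : q ^ n * ψ (n + 1) 0 0 * (c₁ ^ 2 * a * (q ^ m * q)) ≠ 0 := by
    apply mul_ne_zero (mul_ne_zero hv hP)
    exact mul_ne_zero (mul_ne_zero (pow_ne_zero _ hc₁) ha) (mul_ne_zero hu hq)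
  apply mul_right_cancel₀ hK
  linear_combination (c₁ ^ 2 * a * (q ^ m * q)) * E3a - (q * (c₁ ^ 2 * a * (q ^ m * q))) * E3b - (c₁ ^ 2 * a * (q ^ m * q)) ^ 2 * e2
end

section
/- Suppose X_n ≠ 0 satisfies the discrete Riccati equation X_{n+1} = (1 - q^{n+2})/(X_n + i c₁ a q^{n-m+1}) for all n ≥ 0. Then X_n satisfies the q-Painlevé IV equation (X_{n+1}X_n - 1)(X_{n-1}X_n - 1) = q^{-N+2n-m-1}a₀a₁^{3/2}a₂²·(X_n + q^{N-m}a₁^{1/2})(X_n + q^{-N+m}a₁^{-1/2})/(X_n + q^{-N+n-m}a₁^{1/2}a₂) for all n ≥ 1, where a₀^{1/2} = -i q a⁻¹c₁⁻¹, a₀^{1/2}a₁^{1/2} = q^{-N}, a₂ = q^{2N+2}. -/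
set_option maxHeartbeats 1000000 in
/-- solutions of the discrete Riccati equation
`X_{n+1} = (1-q^{n+2})/(Xₙ + i c₁ a q^{n-m+1})` solve the q-Painlevé IV equation. -/
theorem riccati_to_qPIV
    (q a c₁ : ℂ) (hq : q ≠ 0) (ha : a ≠ 0) (hc₁ : c₁ ≠ 0)
    (hq0 : 0 < ‖q‖) (hq1 : ‖q‖ < 1)
    (m N : ℤ)
    (sa₀ sa₁ a₀ a₁ a₂ : ℂ)
    (hsa₀ : sa₀ = -Complex.I * q * a⁻¹ * c₁⁻¹)
    (hsa₀₁ : sa₀ * sa₁ = q ^ (-N))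
    (ha₀ : a₀ = sa₀ ^ 2) (ha₁ : a₁ = sa₁ ^ 2) (ha₂ : a₂ = q ^ (2 * N + 2))
    (X : ℕ → ℂ) (hXne : ∀ n, X n ≠ 0)
    (hric : ∀ n : ℕ,
      X (n + 1) * (X n + Complex.I * c₁ * a * q ^ ((n : ℤ) - m + 1)) = 1 - q ^ (n + 2))
    (hden : ∀ n : ℕ, X n + q ^ (-N + (n : ℤ) - m) * sa₁ * a₂ ≠ 0) :
    ∀ n : ℕ, 1 ≤ n →
      (X (n + 1) * X n - 1) * (X (n - 1) * X n - 1)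
        = q ^ (-N + 2 * (n : ℤ) - m - 1) * a₀ * (a₁ * sa₁) * a₂ ^ 2
          * ((X n + q ^ (N - m) * sa₁) * (X n + q ^ (-N + m) * sa₁⁻¹))
          / (X n + q ^ (-N + (n : ℤ) - m) * sa₁ * a₂) := by
  intro n hn
  obtain ⟨k, rfl⟩ : ∃ k, n = k + 1 := ⟨n - 1, (Nat.succ_pred_eq_of_pos hn).symm⟩
  simp only [Nat.add_sub_cancel]
  have hI : Complex.I ≠ 0 := Complex.I_ne_zero
  have hsa₀ne : sa₀ ≠ 0 := by
    rw [hsa₀]; simp [hI, hq, ha, hc₁]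
  have hsa₁ : sa₁ = Complex.I * a * c₁ * q ^ (-N) * q⁻¹ := by
    have h2 : sa₀ * (Complex.I * a * c₁ * q ^ (-N) * q⁻¹) = q ^ (-N) := by
      rw [hsa₀]
      have e : -Complex.I * q * a⁻¹ * c₁⁻¹ * (Complex.I * a * c₁ * q ^ (-N) * q⁻¹)
          = -(Complex.I * Complex.I) * (q * q⁻¹) * (a * a⁻¹) * (c₁ * c₁⁻¹) * q ^ (-N) := by
        ring
      rw [e, Complex.I_mul_I, mul_inv_cancel₀ hq, mul_inv_cancel₀ ha, mul_inv_cancel₀ hc₁]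
      ring
    exact mul_left_cancel₀ hsa₀ne (hsa₀₁.trans h2.symm)
  have hsa₁ne : sa₁ ≠ 0 := by
    rw [hsa₁]
    exact mul_ne_zero (mul_ne_zero (mul_ne_zero (mul_ne_zero hI ha) hc₁) (zpow_ne_zero _ hq)) (inv_ne_zero hq)
  have hwne : (q : ℂ) ^ (N:ℤ) ≠ 0 := zpow_ne_zero _ hq
  have hvne : (q : ℂ) ^ (m:ℤ) ≠ 0 := zpow_ne_zero _ hq
  have hune : (q : ℂ) ^ ((k:ℤ)) ≠ 0 := zpow_ne_zero _ hq
  -- power splitting lemmas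
  have r1 : (q:ℂ) ^ ((((k+1:ℕ)):ℤ) - m + 1) = q^(k:ℤ) * (q^(m:ℤ))⁻¹ * q^2 := by
    rw [show (((k+1:ℕ)):ℤ) - m + 1 = ((k:ℤ)) + (-m) + 2 by push_cast; ring,
      zpow_add₀ hq, zpow_add₀ hq, zpow_neg]
    norm_cast
  have r2 : (q:ℂ) ^ ((k:ℤ) - m + 1) = q^(k:ℤ) * (q^(m:ℤ))⁻¹ * q := by
    rw [show ((k:ℤ)) - m + 1 = ((k:ℤ)) + (-m) + 1 by ring,
      zpow_add₀ hq, zpow_add₀ hq, zpow_neg, zpow_one]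
  have r5 : (q:ℂ) ^ (-N + (((k+1:ℕ)):ℤ) - m) = (q^(N:ℤ))⁻¹ * q^(k:ℤ) * (q^(m:ℤ))⁻¹ * q := by
    rw [show -N + (((k+1:ℕ)):ℤ) - m = (-N) + ((k:ℤ)) + (-m) + 1 by push_cast; ring,
      zpow_add₀ hq, zpow_add₀ hq, zpow_add₀ hq, zpow_neg, zpow_neg, zpow_one]
  have r6 : (q:ℂ) ^ (-N + 2 * (((k+1:ℕ)):ℤ) - m - 1) = (q^(N:ℤ))⁻¹ * (q^(k:ℤ) * q^(k:ℤ)) * (q^(m:ℤ))⁻¹ * q := by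
    rw [show -N + 2 * (((k+1:ℕ)):ℤ) - m - 1 = (-N) + ((k:ℤ) + (k:ℤ)) + (-m) + 1 by push_cast; ring,
      zpow_add₀ hq, zpow_add₀ hq, zpow_add₀ hq, zpow_add₀ hq, zpow_neg, zpow_neg, zpow_one]
  have r3 : (q:ℂ) ^ (N - m) = q^(N:ℤ) * (q^(m:ℤ))⁻¹ := by
    rw [zpow_sub₀ hq, div_eq_mul_inv]
  have r4 : (q:ℂ) ^ (-N + m) = (q^(N:ℤ))⁻¹ * q^(m:ℤ) := by
    rw [zpow_add₀ hq, zpow_neg]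
  have r8 : (q:ℂ) ^ (2*N + 2) = q^(N:ℤ) * q^(N:ℤ) * q^2 := by
    rw [show 2*N + 2 = N + N + 2 by ring, zpow_add₀ hq, zpow_add₀ hq]
    norm_cast
  have r7 : (q:ℂ) ^ (-N) = (q^(N:ℤ))⁻¹ := zpow_neg q N
  have p3 : (q:ℂ) ^ (k+1+2) = q^((k:ℤ)) * q^3 := by
    rw [← zpow_natCast q (k+1+2), show ((k+1+2 : ℕ):ℤ) = (k:ℤ) + 3 by push_cast; ring,
      zpow_add₀ hq]
    norm_cast
  have p2 : (q:ℂ) ^ (k+2) = q^((k:ℤ)) * q^2 := by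
    rw [← zpow_natCast q (k+2), show ((k+2 : ℕ):ℤ) = (k:ℤ) + 2 by push_cast; ring,
      zpow_add₀ hq]
    norm_cast
  -- the denominator equals the Riccati denominator
  have key : q ^ (-N + (((k+1:ℕ)):ℤ) - m) * sa₁ * a₂
      = Complex.I * c₁ * a * q ^ ((((k+1:ℕ)):ℤ) - m + 1) := by
    rw [hsa₁, ha₂, r5, r7, r8, r1]
    field_simp [hq, ha, hc₁, hwne, hvne, hune, hI]
  have E1 := hric (k + 1)
  have E2 := hric k
  have hd1 := hden (k + 1)
  rw [key] at hd1
  have hX1 := hXne (k + 1)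
  have hX2 : X (k+1+1) = (1 - q ^ (k+1+2)) / (X (k+1) + Complex.I * c₁ * a * q ^ ((((k+1:ℕ)):ℤ) - m + 1)) :=
    (eq_div_iff hd1).mpr E1
  have hX0 : X k = (1 - q ^ (k+2)) / X (k+1) - Complex.I * c₁ * a * q ^ ((k:ℤ) - m + 1) := by
    field_simp [hq, ha, hc₁, hwne, hvne, hune, hI, hX1, hd1]
    linear_combination E2
  -- coefficient simplification
  have hs0sq : sa₀ ^ 2 = -(q^2 * (a⁻¹)^2 * (c₁⁻¹)^2) := by
    rw [hsa₀]
    linear_combination (q^2*(a⁻¹)^2*(c₁⁻¹)^2) * Complex.I_sq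
  have hs1cube : sa₁ ^ 2 * sa₁ = -(Complex.I * a^3 * c₁^3 * ((q^(N:ℤ))⁻¹)^3 * (q⁻¹)^3) := by
    rw [hsa₁, r7]
    linear_combination (a^3 * c₁^3 * ((q^(N:ℤ))⁻¹)^3 * (q⁻¹)^3 * Complex.I) * Complex.I_sq
  have hC : q ^ (-N + 2 * (((k+1:ℕ)):ℤ) - m - 1) * a₀ * (a₁ * sa₁) * a₂ ^ 2
      = Complex.I * a * c₁ * (q^(k:ℤ) * q^(k:ℤ) * (q^(m:ℤ))⁻¹ * q^4) := by
    rw [ha₀, hs0sq, ha₁, hs1cube, ha₂, r6, r8]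
    simp only [inv_pow]
    field_simp [hq, ha, hc₁, hwne, hvne, hune, hI]
  have hP1 : q ^ (N - m) * sa₁ = Complex.I * a * c₁ * ((q^(m:ℤ))⁻¹ * q⁻¹) := by
    rw [hsa₁, r3, r7]
    field_simp [hq, ha, hc₁, hwne, hvne, hune, hI]
  have hIac : Complex.I * a * c₁ ≠ 0 := mul_ne_zero (mul_ne_zero hI ha) hc₁
  have hP2 : q ^ (-N + m) * sa₁⁻¹ = q^(m:ℤ) * q * (Complex.I * a * c₁)⁻¹ := by
    rw [hsa₁, r4, r7]
    rw [mul_inv, mul_inv, mul_inv, inv_inv]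
    field_simp [hq, ha, hc₁, hwne, hvne, hune, hI, hX1, hIac, hd1]
  have hRHS : q ^ (-N + 2 * (((k+1:ℕ)):ℤ) - m - 1) * a₀ * (a₁ * sa₁) * a₂ ^ 2
      * ((X (k+1) + q ^ (N - m) * sa₁) * (X (k+1) + q ^ (-N + m) * sa₁⁻¹))
      = q^(k:ℤ) * q^(k:ℤ) * q^3 * (q^(m:ℤ) * q^(m:ℤ))⁻¹
        * ((q^(m:ℤ) * q * X (k+1) + Complex.I * a * c₁)
          * (Complex.I * a * c₁ * X (k+1) + q^(m:ℤ) * q)) := by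
    rw [hC, hP1, hP2]
    field_simp [hq, ha, hc₁, hwne, hvne, hune, hI, hX1, hIac, hd1]
  rw [key, hRHS, eq_div_iff hd1]
  linear_combination (norm := (rw [r1, r2, p3, p2]; field_simp [hvne, hq]; ring))
    (X (k+1) * (X k * X (k+1) - 1)) * E1
    + (X (k+1) * (1 - q^(k+1+2)) - (X (k+1) + Complex.I * c₁ * a * q ^ ((((k+1:ℕ)):ℤ) - m + 1))) * E2
end
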